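/- Let F : K → ℝ be a Legendre function on a closed convex set K ⊆ ℝ^n, let C ⊆ K be a nonempty affine subspace, let π₀ be in the interior Ω of K, and let π̄ be the Bregman projection of π₀ onto C. Then the Pythagorean identity holds with equality: for every π ∈ C, B_F(π ‖ π₀) = B_F(π ‖ π̄) + B_F(π̄ ‖ π₀). -/

import Mathlib

open scoped InnerProductSpace BigOperators

noncomputable def breg {n : ℕ} (F : EuclideanSpace ℝ (Fin n) → ℝ)
    (g : EuclideanSpace ℝ (Fin n) → EuclideanSpace ℝ (Fin n))
    (p q : EuclideanSpace ℝ (Fin n)) : ℝ :=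
  F p - F q - ⟪g q, p - q⟫_ℝ

/-- Pythagorean identity with equality for the Bregman projection
`π̄` of `π₀` onto a nonempty affine subspace `C`. -/
theorem stmt14 {n : ℕ} (K : Set (EuclideanSpace ℝ (Fin n)))
    (hKcl : IsClosed K) (hKco : Convex ℝ K)
    (C : Set (EuclideanSpace ℝ (Fin n))) (hCne : C.Nonempty) (hCK : C ⊆ K)
    (hCaff : ∀ p ∈ C, ∀ q ∈ C, ∀ t : ℝ, p + t • (q - p) ∈ C)
    (F : EuclideanSpace ℝ (Fin n) → ℝ)
    (g : EuclideanSpace ℝ (Fin n) → EuclideanSpace ℝ (Fin n))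
    (hstrict : StrictConvexOn ℝ (interior K) F)
    (hg : ∀ x ∈ interior K, HasGradientAt F (g x) x)
    (π₀ : EuclideanSpace ℝ (Fin n)) (hπ₀ : π₀ ∈ interior K)
    (πb : EuclideanSpace ℝ (Fin n)) (hπb : πb ∈ C) (hπbΩ : πb ∈ interior K)
    (hmin : ∀ π ∈ C, breg F g πb π₀ ≤ breg F g π π₀) :
    ∀ π ∈ C, breg F g π π₀ = breg F g π πb + breg F g πb π₀ := by
  intro π hπ
  set v : EuclideanSpace ℝ (Fin n) := π - πb with hv
  -- the line through πb in direction v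
  set L : ℝ → EuclideanSpace ℝ (Fin n) := fun t => πb + t • v with hL
  have hLC : ∀ t : ℝ, L t ∈ C := fun t => hCaff πb hπb π hπ t
  have hL0 : L 0 = πb := by simp [hL]
  -- φ(t) = breg F g (L t) π₀ has a global minimum at 0
  have hminφ : IsLocalMin (fun t => breg F g (L t) π₀) 0 := by
    apply IsMinOn.isLocalMin (s := Set.univ)
    · intro t _
      simpa [hL0] using hmin (L t) (hLC t)
    · exact Filter.univ_mem
  -- L has derivative v at 0
  have hLd : HasDerivAt L v 0 := by
    have : HasDerivAt (fun t : ℝ => t • v) ((1 : ℝ) • v) 0 :=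
      (hasDerivAt_id 0).smul_const v
    have h := this.const_add πb
    rw [one_smul] at h
    exact h
  -- F ∘ L has derivative ⟪g πb, v⟫ at 0
  have hFd : HasDerivAt (fun t => F (L t)) ⟪g πb, v⟫_ℝ 0 := by
    have hF : HasFDerivAt F ((InnerProductSpace.toDual ℝ _) (g πb)) πb :=
      (hg πb hπbΩ).hasFDerivAt
    rw [← hL0] at hF
    have := hF.comp_hasDerivAt 0 hLd
    simp [hL0, Function.comp] at this
    exact this
  -- the inner product term is affine in t
  have hφd : HasDerivAt (fun t => breg F g (L t) π₀)
      (⟪g πb, v⟫_ℝ - ⟪g π₀, v⟫_ℝ) 0 := by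
    have h2 : HasDerivAt (fun t : ℝ => ⟪g π₀, L t - π₀⟫_ℝ) ⟪g π₀, v⟫_ℝ 0 := by
      have : ∀ t : ℝ, ⟪g π₀, L t - π₀⟫_ℝ = ⟪g π₀, πb - π₀⟫_ℝ + t * ⟪g π₀, v⟫_ℝ := by
        intro t
        have : L t - π₀ = (πb - π₀) + t • v := by
          simp [hL]; abel
        rw [this, inner_add_right, real_inner_smul_right]
      rw [show (fun t : ℝ => ⟪g π₀, L t - π₀⟫_ℝ)
          = fun t : ℝ => ⟪g π₀, πb - π₀⟫_ℝ + t * ⟪g π₀, v⟫_ℝ from funext this]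
      simpa using ((hasDerivAt_id (0:ℝ)).mul_const ⟪g π₀, v⟫_ℝ).const_add ⟪g π₀, πb - π₀⟫_ℝ
    have := (hFd.sub_const (F π₀)).sub h2
    exact this
  have hzero : ⟪g πb, v⟫_ℝ - ⟪g π₀, v⟫_ℝ = 0 :=
    hminφ.hasDerivAt_eq_zero hφd
  -- algebra
  have hexp : breg F g π π₀ - (breg F g π πb + breg F g πb π₀)
      = ⟪g πb, v⟫_ℝ - ⟪g π₀, v⟫_ℝ := by
    simp only [breg, hv]
    have : π - π₀ = (π - πb) + (πb - π₀) := by abel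
    rw [this, inner_add_right]
    ring
  linarith [hexp, hzero]
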